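/- Let β be a positive integer and let B = {(n_1,…,n_d,i) ∈ N^{d+1} : n_1 + ⋯ + n_d ≤ iβ}. Then B is a subsemigroup of N^{d+1} generated by B ∩ (N^d × {1}). -/
import Mathlib

lemma exists_sub_vec {d : ℕ} (n : Fin d → ℕ) (k : ℕ) (hk : k ≤ ∑ i, n i) :
    ∃ m : Fin d → ℕ, m ≤ n ∧ ∑ i, m i = k := by
  induction k with
  | zero => exact ⟨0, fun i => Nat.zero_le _, by simp⟩
  | succ k ih =>
    obtain ⟨m, hm, hs⟩ := ih (Nat.le_of_succ_le hk)
    have hlt : ∑ i, m i < ∑ i, n i := by omega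
    have : ∃ j, m j < n j := by
      by_contra h
      push_neg at h
      have : ∑ i, n i ≤ ∑ i, m i := Finset.sum_le_sum (fun i _ => h i)
      omega
    obtain ⟨j, hj⟩ := this
    refine ⟨m + Pi.single j 1, fun i => ?_, by
      simp [Finset.sum_add_distrib, Finset.sum_pi_single', hs]⟩
    by_cases hij : i = j
    · subst hij; simp; omega
    · simp [Pi.single_apply, hij]; exact hm i

theorem semigroup_B_generated_in_degree_one (d β : ℕ) (hβ : 0 < β)
    (B : Set ((Fin d → ℕ) × ℕ)) (hB : B = {p | ∑ i, p.1 i ≤ p.2 * β}) :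
    (∀ x y : (Fin d → ℕ) × ℕ, x ∈ B → y ∈ B → x + y ∈ B) ∧
    B = (AddSubmonoid.closure {p : (Fin d → ℕ) × ℕ | p ∈ B ∧ p.2 = 1} :
      Set ((Fin d → ℕ) × ℕ)) := by
  subst hB
  have hadd : ∀ x y : (Fin d → ℕ) × ℕ,
      x ∈ {p : (Fin d → ℕ) × ℕ | ∑ i, p.1 i ≤ p.2 * β} →
      y ∈ {p : (Fin d → ℕ) × ℕ | ∑ i, p.1 i ≤ p.2 * β} →
      x + y ∈ {p : (Fin d → ℕ) × ℕ | ∑ i, p.1 i ≤ p.2 * β} := by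
    intro x y hx hy
    simp only [Set.mem_setOf_eq, Prod.fst_add, Prod.snd_add, Pi.add_apply,
      Finset.sum_add_distrib, add_mul] at *
    omega
  refine ⟨hadd, ?_⟩
  apply Set.Subset.antisymm
  · -- B ⊆ closure S
    intro p hp
    obtain ⟨n, i⟩ := p
    simp only [Set.mem_setOf_eq] at hp
    induction i generalizing n with
    | zero =>
      have : n = 0 := by
        funext j
        have h1 : ∑ i, n i = 0 := by omega
        have := (Finset.sum_eq_zero_iff.mp h1) j (Finset.mem_univ j)
        simpa using this
      rw [this]
      exact zero_mem _
    | succ i ih =>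
      rw [add_mul, one_mul] at hp
      by_cases h : ∑ j, n j ≤ i * β
      · have h1 : ((0 : Fin d → ℕ), 1) ∈
            {p : (Fin d → ℕ) × ℕ | p ∈ {p : (Fin d → ℕ) × ℕ | ∑ i, p.1 i ≤ p.2 * β} ∧ p.2 = 1} :=
          ⟨by simp, rfl⟩
        have : ((n, i + 1) : (Fin d → ℕ) × ℕ) = (n, i) + (0, 1) := by
          simp [Prod.ext_iff]
        rw [this]
        exact add_mem (ih n h) (AddSubmonoid.subset_closure h1)
      · push_neg at h
        obtain ⟨m, hm, hs⟩ := exists_sub_vec n ((∑ j, n j) - i * β) (by omega)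
        set nm : Fin d → ℕ := fun j => n j - m j with hnm
        have hsum : (∑ j, nm j) + ∑ j, m j = ∑ j, n j := by
          rw [← Finset.sum_add_distrib]
          exact Finset.sum_congr rfl (fun j _ => by have : m j ≤ n j := hm j; simp [hnm]; omega)
        have h1 : ((m, 1) : (Fin d → ℕ) × ℕ) ∈
            {p : (Fin d → ℕ) × ℕ | p ∈ {p : (Fin d → ℕ) × ℕ | ∑ i, p.1 i ≤ p.2 * β} ∧ p.2 = 1} := by
          refine ⟨?_, rfl⟩
          simp only [Set.mem_setOf_eq, one_mul]
          omega
        have h2 : ((nm, i) : (Fin d → ℕ) × ℕ) ∈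
            AddSubmonoid.closure
              {p : (Fin d → ℕ) × ℕ | p ∈ {p : (Fin d → ℕ) × ℕ | ∑ i, p.1 i ≤ p.2 * β} ∧ p.2 = 1} := by
          apply ih
          omega
        have heq : ((n, i + 1) : (Fin d → ℕ) × ℕ) = (nm, i) + (m, 1) := by
          refine Prod.ext ?_ rfl
          funext j
          have : m j ≤ n j := hm j
          simp only [Prod.fst_add, Pi.add_apply, hnm]
          omega
        rw [heq]
        exact add_mem h2 (AddSubmonoid.subset_closure h1)
  · -- closure S ⊆ B
    have : AddSubmonoid.closure
        {p : (Fin d → ℕ) × ℕ | p ∈ {p : (Fin d → ℕ) × ℕ | ∑ i, p.1 i ≤ p.2 * β} ∧ p.2 = 1} ≤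
        { carrier := {p : (Fin d → ℕ) × ℕ | ∑ i, p.1 i ≤ p.2 * β},
          add_mem' := fun {a b} ha hb => hadd a b ha hb,
          zero_mem' := by simp } := by
      apply AddSubmonoid.closure_le.mpr
      intro p hp
      exact hp.1
    exact this
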